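/- arXiv:2602.20729 — 3 statements merged into one kernel-verified Lean document; each statement's English description precedes it below -/
import Mathlib

section
/- Nonemptiness of the core of a supermodular capacity: if m is a supermodular capacity on a nonempty finite set Ω, then core(m) is nonempty, i.e., there exists a probability vector P on Ω with P(A) ≥ m(A) for every A ⊆ Ω. -/
open Finset Filter

/-- A capacity on a finite type `Ω`: a normalized monotone set function. -/
def IsCapacity {Ω : Type*} [Fintype Ω] (m : Finset Ω → ℝ) : Prop :=
  m ∅ = 0 ∧ m Finset.univ = 1 ∧ ∀ ⦃A B : Finset Ω⦄, A ⊆ B → m A ≤ m B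

/-- The initial segment `{σ 0, …, σ (k-1)}` of an enumeration `σ` of `Ω`. -/
def prefSet {Ω : Type*} [Fintype Ω] [DecidableEq Ω]
    (σ : Fin (Fintype.card Ω) ≃ Ω) (k : ℕ) : Finset Ω :=
  (Finset.univ.filter fun j : Fin (Fintype.card Ω) => (j : ℕ) < k).image σ

/-- The Choquet sum of `f` against `m` along an enumeration `σ` of `Ω`. -/
def choquetSum {Ω : Type*} [Fintype Ω] [DecidableEq Ω]
    (m : Finset Ω → ℝ) (f : Ω → ℝ) (σ : Fin (Fintype.card Ω) ≃ Ω) : ℝ :=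
  ∑ i : Fin (Fintype.card Ω),
    f (σ i) * (m (prefSet σ ((i : ℕ) + 1)) - m (prefSet σ (i : ℕ)))

/-- An enumeration of `Ω` along which `f` is weakly decreasing. -/
noncomputable def sortedEquiv {Ω : Type*} [Fintype Ω] (f : Ω → ℝ) :
    Fin (Fintype.card Ω) ≃ Ω :=
  (Tuple.sort fun i => -f ((Fintype.equivFin Ω).symm i)).trans
    (Fintype.equivFin Ω).symm

/-- The discrete Choquet integral of `f` with respect to `m`. -/
noncomputable def choquet {Ω : Type*} [Fintype Ω] [DecidableEq Ω]
    (m : Finset Ω → ℝ) (f : Ω → ℝ) : ℝ :=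
  choquetSum m f (sortedEquiv f)

/-- The dual capacity `m'(A) = 1 - m(Ω \ A)`. -/
def dualCap {Ω : Type*} [Fintype Ω] [DecidableEq Ω]
    (m : Finset Ω → ℝ) (A : Finset Ω) : ℝ :=
  1 - m Aᶜ

/-- Supermodularity: `m(A ∪ B) + m(A ∩ B) ≥ m(A) + m(B)`. -/
def IsSupermodular {Ω : Type*} [DecidableEq Ω] (m : Finset Ω → ℝ) : Prop :=
  ∀ A B : Finset Ω, m A + m B ≤ m (A ∪ B) + m (A ∩ B)

/-- Submodularity: `m(A ∪ B) + m(A ∩ B) ≤ m(A) + m(B)`. -/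
def IsSubmodular {Ω : Type*} [DecidableEq Ω] (m : Finset Ω → ℝ) : Prop :=
  ∀ A B : Finset Ω, m (A ∪ B) + m (A ∩ B) ≤ m A + m B

/-- A probability vector on a finite type `Ω`. -/
def IsProbVector {Ω : Type*} [Fintype Ω] (P : Ω → ℝ) : Prop :=
  (∀ ω, 0 ≤ P ω) ∧ ∑ ω, P ω = 1

/-- Membership in the core of a capacity `m`. -/
def memCore {Ω : Type*} [Fintype Ω] (m : Finset Ω → ℝ) (P : Ω → ℝ) : Prop :=
  IsProbVector P ∧ ∀ A : Finset Ω, m A ≤ ∑ ω ∈ A, P ω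

/-- The λ-rule set function `m_λ(A) = (∏_{ω ∈ A} (1 + λ g(ω)) - 1) / λ`. -/
noncomputable def mLam {Ω : Type*} (lam : ℝ) (g : Ω → ℝ) (A : Finset Ω) : ℝ :=
  ((∏ ω ∈ A, (1 + lam * g ω)) - 1) / lam
section Aux
variable {Ω : Type*} [Fintype Ω] [DecidableEq Ω]

lemma mem_prefSet (σ : Fin (Fintype.card Ω) ≃ Ω) (k : ℕ) (ω : Ω) :
    ω ∈ prefSet σ k ↔ ((σ.symm ω : ℕ) < k) := by
  simp only [prefSet, Finset.mem_image, Finset.mem_filter, Finset.mem_univ, true_and]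
  constructor
  · rintro ⟨j, hj, rfl⟩; simpa using hj
  · intro h; exact ⟨σ.symm ω, h, σ.apply_symm_apply ω⟩

lemma prefSet_zero (σ : Fin (Fintype.card Ω) ≃ Ω) : prefSet σ 0 = ∅ := by
  ext ω; simp [mem_prefSet]

lemma prefSet_card (σ : Fin (Fintype.card Ω) ≃ Ω) :
    prefSet σ (Fintype.card Ω) = Finset.univ := by
  ext ω; simp [mem_prefSet, (σ.symm ω).isLt]

lemma prefSet_succ (σ : Fin (Fintype.card Ω) ≃ Ω) {k : ℕ}
    (hk : k < Fintype.card Ω) :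
    prefSet σ (k + 1) = insert (σ ⟨k, hk⟩) (prefSet σ k) := by
  ext ω
  simp only [mem_prefSet, Finset.mem_insert, Nat.lt_succ_iff_lt_or_eq]
  constructor
  · rintro (h | h)
    · exact Or.inr h
    · left
      have : σ.symm ω = ⟨k, hk⟩ := Fin.ext h
      rw [← this, σ.apply_symm_apply]
  · rintro (rfl | h)
    · right; simp
    · exact Or.inl h

lemma prefSet_succ_of_ge (σ : Fin (Fintype.card Ω) ≃ Ω) {k : ℕ}
    (hk : Fintype.card Ω ≤ k) : prefSet σ (k + 1) = prefSet σ k := by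
  ext ω
  simp only [mem_prefSet]
  have h := (σ.symm ω).isLt
  omega

end Aux

/-- the core of a supermodular capacity is nonempty. -/
theorem core_nonempty_of_supermodular {Ω : Type*} [Fintype Ω] [DecidableEq Ω] [Nonempty Ω]
    (m : Finset Ω → ℝ) (hm : IsCapacity m) (hsm : IsSupermodular m) :
    ∃ P : Ω → ℝ, memCore m P := by
  set n := Fintype.card Ω with hn
  set σ : Fin n ≃ Ω := (Fintype.equivFin Ω).symm with hσ
  set P : Ω → ℝ := fun ω =>
    m (prefSet σ ((σ.symm ω : ℕ) + 1)) - m (prefSet σ (σ.symm ω : ℕ)) with hP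
  obtain ⟨hm0, hm1, hmono⟩ := hm
  have hPapp : ∀ i : Fin n, P (σ i) =
      m (prefSet σ ((i : ℕ) + 1)) - m (prefSet σ (i : ℕ)) := by
    intro i; simp [hP]
  -- main claim by induction
  have key : ∀ k : ℕ, ∀ A : Finset Ω, A ⊆ prefSet σ k → m A ≤ ∑ ω ∈ A, P ω := by
    intro k
    induction k with
    | zero =>
      intro A hA
      rw [prefSet_zero] at hA
      rw [Finset.subset_empty.mp hA]
      simp [hm0]
    | succ k ih =>
      intro A hA
      rcases lt_or_ge k n with hk | hk
      · rw [prefSet_succ σ hk] at hA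
        set e := σ ⟨k, hk⟩ with he
        by_cases heA : e ∈ A
        · have heP : e ∉ prefSet σ k := by
            simp [he, mem_prefSet]
          have hU : A ∪ prefSet σ k = prefSet σ (k + 1) := by
            rw [prefSet_succ σ hk]
            apply Finset.Subset.antisymm
            · exact Finset.union_subset hA (Finset.subset_insert _ _)
            · exact Finset.insert_subset (Finset.mem_union_left _ heA)
                (Finset.subset_union_right)
          have hI : A ∩ prefSet σ k = A.erase e := by
            ext ω
            simp only [Finset.mem_inter, Finset.mem_erase]
            constructor
            · rintro ⟨h1, h2⟩
              exact ⟨fun h => heP (h ▸ h2), h1⟩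
            · rintro ⟨h1, h2⟩
              refine ⟨h2, ?_⟩
              rcases Finset.mem_insert.mp (hA h2) with h | h
              · exact absurd h h1
              · exact h
          have hsup := hsm A (prefSet σ k)
          rw [hU, hI] at hsup
          have herase : A.erase e ⊆ prefSet σ k := by
            intro ω hω
            obtain ⟨h1, h2⟩ := Finset.mem_erase.mp hω
            rcases Finset.mem_insert.mp (hA h2) with h | h
            · exact absurd h h1
            · exact h
          have hih := ih (A.erase e) herase
          have hsum : ∑ ω ∈ A, P ω = P e + ∑ ω ∈ A.erase e, P ω :=
            (Finset.add_sum_erase A P heA).symm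
          have hPe : P e = m (prefSet σ (k + 1)) - m (prefSet σ k) := by
            have := hPapp ⟨k, hk⟩
            simpa [he] using this
          rw [hsum, hPe]
          linarith
        · have : A ⊆ prefSet σ k := fun ω hω => by
            rcases Finset.mem_insert.mp (hA hω) with h | h
            · exact absurd h (by rintro rfl; exact heA hω)
            · exact h
          exact ih A this
      · rw [prefSet_succ_of_ge σ hk] at hA
        exact ih A hA
  refine ⟨P, ⟨⟨?_, ?_⟩, ?_⟩⟩
  · intro ω
    have : prefSet σ (σ.symm ω : ℕ) ⊆ prefSet σ ((σ.symm ω : ℕ) + 1) := by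
      intro x hx
      rw [mem_prefSet] at hx ⊢
      omega
    have := hmono this
    simp only [hP]
    linarith
  · rw [← Equiv.sum_comp σ P]
    have : ∀ i : Fin n, P (σ i) =
        (fun j => m (prefSet σ j)) ((i : ℕ) + 1) - (fun j => m (prefSet σ j)) (i : ℕ) :=
      hPapp
    rw [Finset.sum_congr rfl (fun i _ => this i), Fin.sum_univ_eq_sum_range
      (fun j => (fun j => m (prefSet σ j)) (j + 1) - (fun j => m (prefSet σ j)) j) n,
      Finset.sum_range_sub (fun j => m (prefSet σ j)) n]
    rw [prefSet_card, prefSet_zero, hm0, hm1]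
    ring
  · intro A
    exact key n A (by rw [prefSet_card]; exact Finset.subset_univ A)
end

section
/- Existence, uniqueness and sign of the Sugeno parameter: let Ω be a finite set with |Ω| ≥ 2 and g : Ω → ℝ with 0 < g(ω) < 1 for all ω and Σ_{ω∈Ω} g(ω) ≠ 1. Then there exists a unique λ ∈ (−1, ∞) with λ ≠ 0 satisfying ∏_{ω∈Ω}(1 + λ g(ω)) = 1 + λ; moreover λ > 0 if Σ_{ω∈Ω} g(ω) < 1, and −1 < λ < 0 if Σ_{ω∈Ω} g(ω) > 1. -/
open Finset Filter

open Topology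


section Aux

variable {Ω : Type*} [Fintype Ω] [DecidableEq Ω] (g : Ω → ℝ)

lemma sugeno_hasDerivAt1 (x : ℝ) :
    HasDerivAt (fun lam => ∏ ω, (1 + lam * g ω))
      (∑ ω, (∏ ω' ∈ univ.erase ω, (1 + x * g ω')) * g ω) x := by
  have h := HasDerivAt.fun_finsetProd (u := univ) (f := fun ω lam => 1 + lam * g ω)
    (f' := fun ω => g ω) (x := x)
    (fun ω _ => by simpa using ((hasDerivAt_id x).mul_const (g ω)).const_add 1)
  simpa [smul_eq_mul] using h

lemma sugeno_hasDerivAt2 (x : ℝ) :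
    HasDerivAt (fun lam => ∑ ω, (∏ ω' ∈ univ.erase ω, (1 + lam * g ω')) * g ω)
      (∑ ω, (∑ ω' ∈ (univ.erase ω), (∏ ω'' ∈ (univ.erase ω).erase ω', (1 + x * g ω'')) * g ω') * g ω) x := by
  apply HasDerivAt.fun_sum
  intro ω _
  have h := HasDerivAt.fun_finsetProd (u := univ.erase ω) (f := fun ω' lam => 1 + lam * g ω')
    (f' := fun ω' => g ω') (x := x)
    (fun ω' _ => by simpa using ((hasDerivAt_id x).mul_const (g ω')).const_add 1)
  simpa [smul_eq_mul] using h.mul_const (g ω)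

lemma sugeno_factor_pos (hg : ∀ ω, 0 < g ω ∧ g ω < 1) {x : ℝ} (hx : -1 ≤ x) (ω : Ω) :
    0 < 1 + x * g ω := by
  nlinarith [(hg ω).1, (hg ω).2, mul_nonneg (by linarith : (0:ℝ) ≤ x + 1) (hg ω).1.le]

/-- `F lam = ∏ (1 + lam g ω) - (1 + lam)` is strictly convex on `[-1, ∞)`. -/
lemma sugeno_strictConvex (hcard : 2 ≤ Fintype.card Ω) (hg : ∀ ω, 0 < g ω ∧ g ω < 1) :
    StrictConvexOn ℝ (Set.Ici (-1:ℝ))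
      (fun lam => (∏ ω, (1 + lam * g ω)) - (1 + lam)) := by
  apply strictConvexOn_of_deriv2_pos (convex_Ici _)
  · apply Continuous.continuousOn
    exact (continuous_finset_prod _ fun ω _ => by fun_prop).sub (by fun_prop)
  · intro x hx
    rw [interior_Ici] at hx
    have hF1 : ∀ y : ℝ, HasDerivAt (fun lam => (∏ ω, (1 + lam * g ω)) - (1 + lam))
        ((∑ ω, (∏ ω' ∈ univ.erase ω, (1 + y * g ω')) * g ω) - 1) y := fun y =>
      (sugeno_hasDerivAt1 g y).sub (by simpa using (hasDerivAt_id y).const_add 1)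
    have hd1 : deriv (fun lam => (∏ ω, (1 + lam * g ω)) - (1 + lam)) =
        fun y => (∑ ω, (∏ ω' ∈ univ.erase ω, (1 + y * g ω')) * g ω) - 1 :=
      funext fun y => (hF1 y).deriv
    have hF2 : HasDerivAt (fun y => (∑ ω, (∏ ω' ∈ univ.erase ω, (1 + y * g ω')) * g ω) - 1)
        (∑ ω, (∑ ω' ∈ (univ.erase ω), (∏ ω'' ∈ (univ.erase ω).erase ω', (1 + x * g ω'')) * g ω') * g ω) x :=
      (sugeno_hasDerivAt2 g x).sub_const 1
    have : deriv^[2] (fun lam => (∏ ω, (1 + lam * g ω)) - (1 + lam)) x =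
        ∑ ω, (∑ ω' ∈ (univ.erase ω), (∏ ω'' ∈ (univ.erase ω).erase ω', (1 + x * g ω'')) * g ω') * g ω := by
      simp only [Function.iterate_succ, Function.iterate_zero, Function.comp_apply, id_eq, hd1]
      exact hF2.deriv
    rw [this]
    have huniv : (univ : Finset Ω).Nonempty := by
      rw [← Finset.card_pos, Finset.card_univ]; omega
    apply Finset.sum_pos _ huniv
    intro ω _
    apply mul_pos _ (hg ω).1
    have herase : (univ.erase ω).Nonempty := by
      rw [← Finset.card_pos, Finset.card_erase_of_mem (mem_univ ω), Finset.card_univ]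
      omega
    apply Finset.sum_pos _ herase
    intro ω' _
    apply mul_pos _ (hg ω').1
    exact Finset.prod_pos fun ω'' _ => sugeno_factor_pos g hg hx.le ω''

/-- A strictly convex function on `[-1,∞)` has no three roots. -/
lemma sugeno_no_three_roots {F : ℝ → ℝ}
    (h : StrictConvexOn ℝ (Set.Ici (-1:ℝ)) F) {a b c : ℝ} (ha : -1 ≤ a)
    (hab : a < b) (hbc : b < c) (Fa : F a = 0) (Fb : F b = 0) (Fc : F c = 0) : False := by
  have hca : (0:ℝ) < c - a := by linarith
  have key := h.2 (Set.mem_Ici.2 ha) (Set.mem_Ici.2 (by linarith : (-1:ℝ) ≤ c))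
    (by linarith : a ≠ c)
    (div_pos (by linarith) hca : 0 < (c - b)/(c - a))
    (div_pos (by linarith) hca : 0 < (b - a)/(c - a))
    (by field_simp; ring)
  have hb : ((c - b)/(c - a)) • a + ((b - a)/(c - a)) • c = b := by
    rw [smul_eq_mul, smul_eq_mul, div_mul_eq_mul_div, div_mul_eq_mul_div, ← add_div,
      div_eq_iff hca.ne']
    ring
  rw [hb, Fa, Fb, Fc, smul_eq_mul, smul_eq_mul] at key
  simp at key
end Aux


lemma sugeno_main {Ω : Type*} [Fintype Ω] [DecidableEq Ω]
    (hcard : 2 ≤ Fintype.card Ω)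
    (g : Ω → ℝ) (hg : ∀ ω, 0 < g ω ∧ g ω < 1) (hsum : ∑ ω, g ω ≠ 1) :
    (∃! lam : ℝ, -1 < lam ∧ lam ≠ 0 ∧ ∏ ω, (1 + lam * g ω) = 1 + lam) ∧
    (∀ lam : ℝ, (-1 < lam ∧ lam ≠ 0 ∧ ∏ ω, (1 + lam * g ω) = 1 + lam) →
      ((∑ ω, g ω < 1 → 0 < lam) ∧ (1 < ∑ ω, g ω → lam < 0))) := by
  set F : ℝ → ℝ := fun lam => (∏ ω, (1 + lam * g ω)) - (1 + lam) with hF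
  have hconv := sugeno_strictConvex g hcard hg
  have hFcont : Continuous F := by
    apply Continuous.sub
    · exact continuous_finset_prod _ fun ω _ => by fun_prop
    · fun_prop
  have hF0 : F 0 = 0 := by simp [hF]
  have hFneg1 : 0 < F (-1) := by
    have h1 : F (-1) = ∏ ω, (1 + (-1) * g ω) := by simp [hF]
    rw [h1]
    exact Finset.prod_pos fun ω _ => by nlinarith [(hg ω).2]
  have hder0 : HasDerivAt F ((∑ ω, g ω) - 1) 0 := by
    have := (sugeno_hasDerivAt1 g 0).sub ((hasDerivAt_id (0:ℝ)).const_add 1)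
    simpa [hF, Pi.sub_def] using this
  -- uniqueness of nonzero roots
  have uniq : ∀ y z : ℝ, (-1 < y ∧ y ≠ 0 ∧ F y = 0) → (-1 < z ∧ z ≠ 0 ∧ F z = 0) →
      y = z := by
    have key : ∀ y z : ℝ, (-1 < y ∧ y ≠ 0 ∧ F y = 0) → (-1 < z ∧ z ≠ 0 ∧ F z = 0) →
        y < z → False := by
      rintro y z ⟨hy1, hy0, hyr⟩ ⟨hz1, hz0, hzr⟩ hyz
      rcases hy0.lt_or_gt with hy | hy
      · rcases hz0.lt_or_gt with hz | hz
        · exact sugeno_no_three_roots hconv hy1.le hyz hz hyr hzr hF0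
        · exact sugeno_no_three_roots hconv hy1.le hy hz hyr hF0 hzr
      · exact sugeno_no_three_roots hconv (by linarith) hy (by linarith) hF0 hyr hzr
    intro y z hy hz
    rcases lt_trichotomy y z with h | h | h
    · exact absurd (key y z hy hz h) id
    · exact h
    · exact absurd (key z y hz hy h) id
  -- a root of F gives the full conclusion, provided its sign matches
  have finish : ∀ c : ℝ, (-1 < c ∧ c ≠ 0 ∧ F c = 0) →
      ((∑ ω, g ω < 1 → 0 < c) ∧ (1 < ∑ ω, g ω → c < 0)) →
      (∃! lam : ℝ, -1 < lam ∧ lam ≠ 0 ∧ ∏ ω, (1 + lam * g ω) = 1 + lam) ∧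
      (∀ lam : ℝ, (-1 < lam ∧ lam ≠ 0 ∧ ∏ ω, (1 + lam * g ω) = 1 + lam) →
        ((∑ ω, g ω < 1 → 0 < lam) ∧ (1 < ∑ ω, g ω → lam < 0))) := by
    rintro c hc hcsign
    have equiv : ∀ t : ℝ, ((-1 < t ∧ t ≠ 0 ∧ ∏ ω, (1 + t * g ω) = 1 + t) ↔
        (-1 < t ∧ t ≠ 0 ∧ F t = 0)) := by
      intro t
      simp only [hF, sub_eq_zero]
    constructor
    · refine ⟨c, (equiv c).2 hc, fun y hy => uniq y c ((equiv y).1 hy) hc⟩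
    · intro lam hlam
      have : lam = c := uniq lam c ((equiv lam).1 hlam) hc
      subst this
      exact hcsign
  -- large positive point where F > 0
  obtain ⟨ω₁, ω₂, hω⟩ := Fintype.exists_pair_of_one_lt_card (α := Ω) (by omega)
  set L : ℝ := 1/(g ω₁ * g ω₂) + 1 with hLdef
  have ha := hg ω₁; have hb := hg ω₂
  have hab : 0 < g ω₁ * g ω₂ := mul_pos ha.1 hb.1
  have hL1 : 1 < L := by
    have h2 : 1 ≤ 1/(g ω₁ * g ω₂) := by
      rw [le_div_iff₀ hab]; nlinarith [ha.2, hb.2]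
    simp only [hLdef]; linarith
  have hFL : 0 < F L := by
    have hLpos : (0:ℝ) < L := by linarith
    have hprodge : (1 + L * g ω₁) * (1 + L * g ω₂) ≤ ∏ ω, (1 + L * g ω) := by
      have hsub : ({ω₁, ω₂} : Finset Ω) ⊆ univ := subset_univ _
      have hsplit := Finset.prod_sdiff (f := fun ω => 1 + L * g ω) hsub
      have hone : (1:ℝ) ≤ ∏ ω ∈ univ \ {ω₁, ω₂}, (1 + L * g ω) := by
        calc (1:ℝ) = ∏ _ω ∈ univ \ ({ω₁, ω₂} : Finset Ω), (1:ℝ) := by simp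
        _ ≤ _ := Finset.prod_le_prod (by simp) (fun ω _ => by nlinarith [(hg ω).1])
      have hpairpos : (0:ℝ) ≤ (1 + L * g ω₁) * (1 + L * g ω₂) :=
        mul_nonneg (by nlinarith [mul_pos hLpos ha.1]) (by nlinarith [mul_pos hLpos hb.1])
      calc (1 + L * g ω₁) * (1 + L * g ω₂)
          = 1 * ((1 + L * g ω₁) * (1 + L * g ω₂)) := by ring
        _ ≤ (∏ ω ∈ univ \ {ω₁, ω₂}, (1 + L * g ω)) *
              ((1 + L * g ω₁) * (1 + L * g ω₂)) :=
            mul_le_mul_of_nonneg_right hone hpairpos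
        _ = (∏ ω ∈ univ \ {ω₁, ω₂}, (1 + L * g ω)) *
              ∏ ω ∈ ({ω₁, ω₂} : Finset Ω), (1 + L * g ω) := by
            rw [Finset.prod_pair hω]
        _ = ∏ ω, (1 + L * g ω) := hsplit
    have hLab : L * (g ω₁ * g ω₂) = 1 + g ω₁ * g ω₂ := by
      simp only [hLdef]; rw [add_mul, one_div_mul_cancel hab.ne', one_mul]
    have hkey : 0 < (1 + L * g ω₁) * (1 + L * g ω₂) - (1 + L) := by
      nlinarith [ha.1, hb.1]
    simp only [hF]
    linarith
  have hslope := hasDerivAt_iff_tendsto_slope.mp hder0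
  rcases lt_or_gt_of_ne hsum with hlt | hgt
  · -- sum < 1 : get x ∈ (0,1) with F x < 0, then root in [x, L]
    have hev : ∀ᶠ x in 𝓝[>] (0:ℝ), slope F 0 x < 0 :=
      (hslope.mono_left (nhdsWithin_mono 0 fun x hx => ne_of_gt hx)).eventually_lt_const
        (by linarith)
    have hmem : ∀ᶠ x in 𝓝[>] (0:ℝ), x ∈ Set.Ioo (0:ℝ) 1 :=
      Filter.eventually_of_mem (Ioo_mem_nhdsGT_of_mem ⟨le_refl 0, one_pos⟩) (fun x hx => hx)
    obtain ⟨x, hx1, hx2⟩ := (hev.and hmem).exists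
    have hxpos : 0 < x := hx2.1
    have hFx : F x < 0 := by
      have : slope F 0 x = F x / x := by
        rw [slope_def_field]; simp [hF0]
      rw [this] at hx1
      rcases div_neg_iff.mp hx1 with h | h
      · exact absurd hxpos (not_lt.2 h.2.le)
      · exact h.1
    have hxL : x ≤ L := by linarith [hx2.2]
    have : (0:ℝ) ∈ Set.Icc (F x) (F L) := ⟨hFx.le, hFL.le⟩
    obtain ⟨c, hcmem, hcF⟩ := intermediate_value_Icc hxL hFcont.continuousOn this
    have hcpos : 0 < c := lt_of_lt_of_le hxpos hcmem.1
    exact finish c ⟨by linarith, ne_of_gt hcpos, hcF⟩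
      ⟨fun _ => hcpos, fun h1 => absurd hlt (not_lt.2 h1.le)⟩
  · -- sum > 1 : get x ∈ (-1,0) with F x < 0, then root in [-1, x]
    have hev : ∀ᶠ x in 𝓝[<] (0:ℝ), 0 < slope F 0 x :=
      (hslope.mono_left (nhdsWithin_mono 0 fun x hx => ne_of_lt hx)).eventually_const_lt
        (by linarith)
    have hmem : ∀ᶠ x in 𝓝[<] (0:ℝ), x ∈ Set.Ioo (-1:ℝ) 0 :=
      Filter.eventually_of_mem (Ioo_mem_nhdsLT_of_mem ⟨by norm_num, le_refl 0⟩) (fun x hx => hx)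
    obtain ⟨x, hx1, hx2⟩ := (hev.and hmem).exists
    have hxneg : x < 0 := hx2.2
    have hFx : F x < 0 := by
      have hs : slope F 0 x = F x / x := by
        rw [slope_def_field]; simp [hF0]
      rw [hs] at hx1
      rcases div_pos_iff.mp hx1 with h | h
      · exact absurd hxneg (not_lt.2 h.2.le)
      · exact h.1
    have hxge : (-1:ℝ) ≤ x := hx2.1.le
    have : (0:ℝ) ∈ Set.Icc (F x) (F (-1)) := ⟨hFx.le, hFneg1.le⟩
    obtain ⟨c, hcmem, hcF⟩ := intermediate_value_Icc' hxge hFcont.continuousOn this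
    have hcneg : c < 0 := lt_of_le_of_lt hcmem.2 hxneg
    have hcgt : -1 < c := by
      rcases eq_or_lt_of_le hcmem.1 with h | h
      · exfalso; rw [← h] at hcF; linarith
      · exact h
    exact finish c ⟨hcgt, ne_of_lt hcneg, hcF⟩
      ⟨fun h1 => absurd hgt (not_lt.2 h1.le), fun _ => hcneg⟩


/-- existence, uniqueness and sign of the Sugeno parameter `λ`. -/
theorem sugeno_parameter_exists_unique {Ω : Type*} [Fintype Ω]
    (hcard : 2 ≤ Fintype.card Ω)
    (g : Ω → ℝ) (hg : ∀ ω, 0 < g ω ∧ g ω < 1) (hsum : ∑ ω, g ω ≠ 1) :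
    (∃! lam : ℝ, -1 < lam ∧ lam ≠ 0 ∧ ∏ ω, (1 + lam * g ω) = 1 + lam) ∧
    (∀ lam : ℝ, (-1 < lam ∧ lam ≠ 0 ∧ ∏ ω, (1 + lam * g ω) = 1 + lam) →
      ((∑ ω, g ω < 1 → 0 < lam) ∧ (1 < ∑ ω, g ω → lam < 0))) := by
  classical
  exact sugeno_main hcard g hg hsum
end

section
/- Supermodularity of λ-fuzzy measures with nonnegative interaction: let Ω be a finite set, λ > 0, and g : Ω → ℝ with 0 < g(ω) < 1 for all ω, satisfying ∏_{ω∈Ω}(1 + λ g(ω)) = 1 + λ, and define m_λ(A) = (∏_{ω∈A}(1 + λ g(ω)) − 1)/λ. Then m_λ is supermodular: m_λ(A ∪ B) + m_λ(A ∩ B) ≥ m_λ(A) + m_λ(B) for all A, B ⊆ Ω. -/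
open Finset Filter

/-- λ-fuzzy measures with positive interaction parameter are supermodular. -/
theorem mLam_supermodular {Ω : Type*} [Fintype Ω] [DecidableEq Ω]
    (lam : ℝ) (hlam : 0 < lam)
    (g : Ω → ℝ) (hg : ∀ ω, 0 < g ω ∧ g ω < 1)
    (hchar : ∏ ω, (1 + lam * g ω) = 1 + lam) :
    ∀ A B : Finset Ω,
      mLam lam g A + mLam lam g B ≤ mLam lam g (A ∪ B) + mLam lam g (A ∩ B) := by
  intro A B
  set p : Finset Ω → ℝ := fun S => ∏ ω ∈ S, (1 + lam * g ω) with hp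
  have hfac : ∀ ω : Ω, (1:ℝ) ≤ 1 + lam * g ω := fun ω => by
    nlinarith [(hg ω).1]
  have hone : ∀ S : Finset Ω, (1:ℝ) ≤ p S := fun S => by
    have : (∏ ω ∈ S, (1:ℝ)) ≤ ∏ ω ∈ S, (1 + lam * g ω) :=
      Finset.prod_le_prod (fun ω _ => zero_le_one) (fun ω _ => hfac ω)
    simpa using this
  have hA : p A = p (A ∩ B) * p (A \ B) := by
    simp only [hp]
    exact (Finset.prod_inter_mul_prod_diff A B _).symm
  have hB : p B = p (A ∩ B) * p (B \ A) := by
    simp only [hp]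
    rw [Finset.inter_comm]
    exact (Finset.prod_inter_mul_prod_diff B A _).symm
  have hU : p (A ∪ B) = p A * p (B \ A) := by
    simp only [hp]
    rw [← Finset.prod_union Finset.disjoint_sdiff, Finset.union_sdiff_self_eq_union]
  have key : p A + p B ≤ p (A ∪ B) + p (A ∩ B) := by
    have hi := hone (A ∩ B)
    have hx := hone (A \ B)
    have hy := hone (B \ A)
    rw [hA, hB, hU, hA]
    nlinarith [mul_nonneg (sub_nonneg.mpr hx) (sub_nonneg.mpr hy)]
  unfold mLam
  rw [← add_div, ← add_div, div_le_div_iff_of_pos_right hlam]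
  have e1 : p A = ∏ ω ∈ A, (1 + lam * g ω) := rfl
  have e2 : p B = ∏ ω ∈ B, (1 + lam * g ω) := rfl
  have e3 : p (A ∪ B) = ∏ ω ∈ A ∪ B, (1 + lam * g ω) := rfl
  have e4 : p (A ∩ B) = ∏ ω ∈ A ∩ B, (1 + lam * g ω) := rfl
  linarith [key]
end
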